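/- The function s is strictly decreasing on the interval (0, 1], and s(1) = π/√12. -/

import Mathlib

set_option maxHeartbeats 1000000

open Real

/-- Florian's bound. -/
noncomputable def florianS (q : ℝ) : ℝ :=
  (π * q ^ 2 + 2 * (1 - q ^ 2) * arcsin (q / (1 + q))) / (2 * q * Real.sqrt (1 + 2 * q))

open Real

lemma sin_tangent_bound {t : ℝ} (ht0 : 0 ≤ t) (ht : t ≤ π/6) :
    Real.sin t ≤ 1/2 - (Real.sqrt 3 / 2) * (π/6 - t) := by
  have hmono : MonotoneOn (fun t : ℝ => Real.sin t - (Real.sqrt 3 / 2) * t) (Set.Icc 0 (π/6)) := by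
    apply monotoneOn_of_hasDerivWithinAt_nonneg (f' := fun t => Real.cos t - Real.sqrt 3 / 2)
      (convex_Icc 0 (π/6))
    · exact ((Real.continuous_sin.sub (continuous_const.mul continuous_id)).continuousOn)
    · intro x hx
      exact ((Real.hasDerivAt_sin x).sub ((hasDerivAt_id x).const_mul (Real.sqrt 3 / 2))).hasDerivWithinAt.congr_deriv (by ring)
    · intro x hx
      rw [interior_Icc] at hx
      have : Real.cos (π/6) < Real.cos x :=
        Real.cos_lt_cos_of_nonneg_of_le_pi hx.1.le (by linarith [Real.pi_pos]) hx.2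
      rw [Real.cos_pi_div_six] at this
      linarith
  have h6 : (0:ℝ) ≤ π/6 := by positivity
  have := hmono ⟨ht0, ht⟩ ⟨h6, le_refl _⟩ ht
  simp only [Real.sin_pi_div_six] at this
  linarith

lemma florian_key {q : ℝ} (h0 : 0 < q) (h1 : q < 1) :
    2*π*q^2*(1+q) + 4*q*(1-q)*Real.sqrt (1+2*q)
      < 4*(1+3*q+q^2+q^3) * arcsin (q/(1+q)) := by
  have hq1 : (0:ℝ) < 1 + q := by linarith
  have h12 : (0:ℝ) < 1 + 2*q := by linarith
  set r : ℝ := Real.sqrt (1+2*q) with hr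
  have hr0 : 0 < r := Real.sqrt_pos.2 h12
  have hrsq : r^2 = 1+2*q := Real.sq_sqrt h12.le
  set x : ℝ := q/(1+q) with hxdef
  have hx0 : 0 < x := by positivity
  have hx1 : x < 1 := (div_lt_one hq1).2 (by linarith)
  have hxhalf : x < 1/2 := by
    rw [hxdef, div_lt_iff₀ hq1]; linarith
  have hsin : Real.sin (arcsin x) = x := Real.sin_arcsin (by linarith) hx1.le
  have hA0 : 0 < arcsin x := Real.arcsin_pos.2 hx0
  set S : ℝ := 1+3*q+q^2+q^3 with hSdef
  have hS0 : (0:ℝ) < S := by rw [hSdef]; nlinarith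
  rcases le_or_gt q (1/2) with hq2 | hq2
  · -- small q: arcsin x > x
    have hAx : x < arcsin x := by
      conv_lhs => rw [← hsin]
      exact Real.sin_lt hA0
    -- polynomial bound
    have hpoly : 4*(1-q^2)*r ≤ 4*S - 2*(3.141593)*q*(1+q)^2 := by
      set a : ℝ := 4*(1-q^2) with ha
      set b : ℝ := 4*S - 2*(3.141593)*q*(1+q)^2 with hb
      have ha0 : 0 ≤ a := by rw [ha]; nlinarith
      have hb0 : 0 < b := by rw [hb, hSdef]; nlinarith
      have hkey : a^2*(1+2*q) ≤ b^2 := by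
        rw [ha, hb, hSdef]
        nlinarith [sq_nonneg q, sq_nonneg (q*(1/2-q)), mul_pos h0 h0,
          mul_nonneg h0.le (sub_nonneg.2 hq2)]
      nlinarith [mul_nonneg ha0 hr0.le, hrsq, hkey,
        mul_nonneg (mul_nonneg ha0 ha0) hr0.le]
    have hπ : π < 3.141593 := Real.pi_lt_d6
    have hstep1 : (2*π*q^2*(1+q) + 4*q*(1-q)*r)*(1+q) ≤ 4*S*q := by
      have hP' : q*(4*(1-q^2)*r) ≤ q*(4*S - 2*(3.141593)*q*(1+q)^2) :=
        mul_le_mul_of_nonneg_left hpoly h0.le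
      have hc : 2*π*(q^2*(1+q)^2) ≤ 2*(3.141593)*(q^2*(1+q)^2) := by
        have hnn : (0:ℝ) ≤ q^2*(1+q)^2 := by positivity
        nlinarith [mul_le_mul_of_nonneg_right hπ.le hnn]
      nlinarith [hP', hc]
    have h' : 2*π*q^2*(1+q) + 4*q*(1-q)*r ≤ 4*S*q/(1+q) := (le_div_iff₀ hq1).2 hstep1
    have hxq : 4*S*x = 4*S*q/(1+q) := by rw [hxdef]; ring
    have hlt : 4*S*x < 4*S*arcsin x := by
      apply mul_lt_mul_of_pos_left hAx (by positivity)
    calc 2*π*q^2*(1+q) + 4*q*(1-q)*r ≤ 4*S*q/(1+q) := h'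
      _ = 4*S*x := hxq.symm
      _ < 4*S*arcsin x := hlt
  · -- large q: tangent line at 1/2
    set t : ℝ := Real.sqrt 3 with htdef
    have ht0 : 0 < t := by rw [htdef]; positivity
    have htsq : t^2 = 3 := Real.sq_sqrt (by norm_num)
    have htub : t < 1.7320509 := by nlinarith
    have hA6 : arcsin x ≤ π/6 := by
      rw [Real.arcsin_le_iff_le_sin ⟨by linarith, hx1.le⟩
        ⟨by linarith [Real.pi_pos], by linarith [Real.pi_pos]⟩, Real.sin_pi_div_six]
      linarith
    have htan : x ≤ 1/2 - (t/2) * (π/6 - arcsin x) := by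
      conv_lhs => rw [← hsin]
      exact sin_tangent_bound hA0.le hA6
    have hA_lb : π/6 - ((1-q)/(1+q))*t/3 ≤ arcsin x := by
      have h1' : t*(π/6 - arcsin x) ≤ 1 - 2*x := by linarith
      have h2' : t*(t*(π/6 - arcsin x)) ≤ t*(1-2*x) := by
        apply mul_le_mul_of_nonneg_left h1' ht0.le
      have h3' : 3*(π/6 - arcsin x) ≤ t*(1-2*x) := by nlinarith
      have hu : 1 - 2*x = (1-q)/(1+q) := by rw [hxdef]; field_simp; ring
      rw [hu] at h3'
      linarith
    have hπ : 3.141592 < π := Real.pi_gt_d6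
    clear_value S t r x
    -- core polynomial inequality
    have htarget : 12*q*(1+q)*r < 2*π*(1+q)*(2*q^2+4*q+1) - 4*S*t := by
      have hmain : 12*q*(1+q)*r < 2*(3.141592)*(1+q)*(2*q^2+4*q+1) - 4*(1.7320509)*S := by
        set a : ℝ := 12*q*(1+q) with ha
        set b : ℝ := 2*(3.141592)*(1+q)*(2*q^2+4*q+1) - 4*(1.7320509)*S with hb
        have ha0 : 0 ≤ a := by rw [ha]; nlinarith
        have hb0 : 0 < b := by rw [hb, hSdef]; nlinarith
        have hkey : a^2*(1+2*q) < b^2 := by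
          rw [ha, hb, hSdef]
          nlinarith [sq_nonneg ((q-1/2)*(1-q)), mul_nonneg (sub_nonneg.2 hq2.le) (sub_nonneg.2 h1.le),
            sq_nonneg (q-1/2), sq_nonneg (1-q)]
        nlinarith [mul_nonneg ha0 hr0.le, hrsq, hkey,
          mul_nonneg (mul_nonneg ha0 ha0) hr0.le]
      have hπt : 2*(3.141592)*(1+q)*(2*q^2+4*q+1) ≤ 2*π*(1+q)*(2*q^2+4*q+1) := by
        have hnn : (0:ℝ) ≤ (1+q)*(2*q^2+4*q+1) := by positivity
        nlinarith [mul_le_mul_of_nonneg_right hπ.le hnn]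
      have hts : 4*S*t ≤ 4*(1.7320509)*S := by
        nlinarith [mul_le_mul_of_nonneg_left htub.le (by positivity : (0:ℝ) ≤ 4*S)]
      linarith
    have hbig : 0 < (1-q) * (2*π*(1+q)*(2*q^2+4*q+1) - (4*S*t + 12*q*(1+q)*r)) :=
      mul_pos (by linarith) (by linarith)
    have hM : 2*π*q^2*(1+q) + 4*q*(1-q)*r < 4*S*(π/6 - ((1-q)/(1+q))*t/3) := by
      have heq : 4*S*(π/6 - ((1-q)/(1+q))*t/3) = (2*π*S*(1+q) - 4*S*t*(1-q))/(3*(1+q)) := by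
        field_simp
        ring
      rw [heq, lt_div_iff₀ (by positivity)]
      rw [hSdef] at hbig ⊢
      nlinarith [hbig]
    calc 2*π*q^2*(1+q) + 4*q*(1-q)*r < 4*S*(π/6 - ((1-q)/(1+q))*t/3) := hM
      _ ≤ 4*S*arcsin x := by
          apply mul_le_mul_of_nonneg_left hA_lb (by positivity)


lemma florian_hasDerivAt {q : ℝ} (h0 : 0 < q) (h1 : q < 1) :
    HasDerivAt florianS
      (((π * (2*q) + ((-(4*q)) * arcsin (q/(1+q)) + 2*(1-q^2) * (1/((1+q) * Real.sqrt (1+2*q))))) * (2*q*Real.sqrt (1+2*q))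
        - (π*q^2 + 2*(1-q^2)*arcsin (q/(1+q))) * (2*Real.sqrt (1+2*q) + 2*q*(1/Real.sqrt (1+2*q))))
        / (2*q*Real.sqrt (1+2*q))^2) q := by
  have hq1 : (0:ℝ) < 1 + q := by linarith
  have h12 : (0:ℝ) < 1 + 2*q := by linarith
  have hr0 : 0 < Real.sqrt (1+2*q) := Real.sqrt_pos.2 h12
  have hu : HasDerivAt (fun q : ℝ => q/(1+q)) (1/(1+q)^2) q := by
    have h := (hasDerivAt_id q).div ((hasDerivAt_id q).const_add 1) hq1.ne'
    refine h.congr_deriv ?_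
    simp only [id]
    field_simp
    ring
  have hx1 : q/(1+q) ≠ -1 := by
    have : 0 < q/(1+q) := by positivity
    linarith
  have hx2 : q/(1+q) ≠ 1 := by
    have : q/(1+q) < 1 := (div_lt_one hq1).2 (by linarith)
    exact this.ne
  have hsq : Real.sqrt (1 - (q/(1+q))^2) = Real.sqrt (1+2*q) / (1+q) := by
    rw [show 1 - (q/(1+q))^2 = (1+2*q)/(1+q)^2 by field_simp; ring]
    rw [Real.sqrt_div h12.le, Real.sqrt_sq hq1.le]
  have hA : HasDerivAt (fun q : ℝ => arcsin (q/(1+q))) (1/((1+q) * Real.sqrt (1+2*q))) q := by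
    have h := (Real.hasDerivAt_arcsin hx1 hx2).comp q hu
    refine h.congr_deriv ?_
    rw [hsq]
    field_simp
  have hR : HasDerivAt (fun q : ℝ => Real.sqrt (1+2*q)) (1/Real.sqrt (1+2*q)) q := by
    have h2 : HasDerivAt (fun q : ℝ => 1+2*q) 2 q := by
      simpa using ((hasDerivAt_id q).const_mul 2).const_add 1
    have h := (Real.hasDerivAt_sqrt h12.ne').comp q h2
    refine h.congr_deriv ?_
    field_simp
  have hN : HasDerivAt (fun q : ℝ => π*q^2 + 2*(1-q^2)*arcsin (q/(1+q)))
      (π * (2*q) + ((-(4*q)) * arcsin (q/(1+q)) + 2*(1-q^2) * (1/((1+q) * Real.sqrt (1+2*q))))) q := by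
    have hp : HasDerivAt (fun q : ℝ => π*q^2) (π*(2*q)) q := by
      have := (hasDerivAt_pow 2 q).const_mul π
      refine this.congr_deriv ?_
      ring
    have hc : HasDerivAt (fun q : ℝ => 2*(1-q^2)) (-(4*q)) q := by
      have := ((hasDerivAt_pow 2 q).const_sub 1).const_mul 2
      refine this.congr_deriv ?_
      ring
    have := hp.add (hc.mul hA)
    exact this
  have hM : HasDerivAt (fun q : ℝ => 2*q*Real.sqrt (1+2*q))
      (2*Real.sqrt (1+2*q) + 2*q*(1/Real.sqrt (1+2*q))) q := by
    have h2q : HasDerivAt (fun q : ℝ => 2*q) 2 q := by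
      simpa using (hasDerivAt_id q).const_mul 2
    have := h2q.mul hR
    exact this
  have hM0 : 2*q*Real.sqrt (1+2*q) ≠ 0 := by positivity
  have := hN.div hM hM0
  exact this

theorem florian_strictAnti :
    StrictAntiOn florianS (Set.Ioc (0 : ℝ) 1) ∧ florianS 1 = π / Real.sqrt 12 := by
  constructor
  · apply strictAntiOn_of_deriv_neg (convex_Ioc 0 1)
    · -- continuity
      apply ContinuousOn.div
      · apply ContinuousOn.add
        · exact (continuous_const.mul (continuous_pow 2)).continuousOn
        · apply ContinuousOn.mul
          · exact (continuous_const.mul ((continuous_const.sub (continuous_pow 2)))).continuousOn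
          · apply Real.continuous_arcsin.comp_continuousOn
            apply ContinuousOn.div continuousOn_id
              (continuousOn_const.add continuousOn_id)
            intro x hx
            have := hx.1
            intro h
            simp only [Pi.add_apply, id] at h
            linarith
      · exact ((continuous_const.mul continuous_id).mul
          (Real.continuous_sqrt.comp (by continuity))).continuousOn
      · intro x hx
        have h0 : 0 < x := hx.1
        have : 0 < 2*x*Real.sqrt (1+2*x) := by
          apply mul_pos (by linarith)
          exact Real.sqrt_pos.2 (by linarith)
        exact this.ne'
    · intro q hq
      rw [interior_Ioc] at hq
      obtain ⟨h0, h1⟩ := hq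
      rw [(florian_hasDerivAt h0 h1).deriv]
      have hq1 : (0:ℝ) < 1 + q := by linarith
      have h12 : (0:ℝ) < 1 + 2*q := by linarith
      set r : ℝ := Real.sqrt (1+2*q) with hrdef
      have hr0 : 0 < r := Real.sqrt_pos.2 h12
      have hrsq : r^2 = 1+2*q := Real.sq_sqrt h12.le
      set A : ℝ := arcsin (q/(1+q)) with hAdef
      apply div_neg_of_neg_of_pos
      · -- numerator of the derivative is negative
        set T : ℝ := (π * (2*q) + ((-(4*q)) * A + 2*(1-q^2) * (1/((1+q) * r)))) * (2*q*r)
          - (π*q^2 + 2*(1-q^2)*A) * (2*r + 2*q*(1/r)) with hT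
        have hTr : T * r = 4*π*q^2*r^2 - 8*q^2*A*r^2 + 4*q*(1-q)*r
            - 2*(r^2+q)*(π*q^2+2*(1-q^2)*A) := by
          rw [hT]
          field_simp
          ring
        rw [hrsq] at hTr
        have hkey := florian_key h0 h1
        rw [← hAdef] at hkey
        have hTrneg : T * r < 0 := by nlinarith [hkey, hTr]
        nlinarith [hTrneg, hr0, mul_pos hr0 hr0]
      · positivity
  · have h12 : Real.sqrt 12 = 2 * Real.sqrt 3 := by
      rw [show (12:ℝ) = 2^2*3 by norm_num, Real.sqrt_mul (by positivity), Real.sqrt_sq (by norm_num)]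
    unfold florianS
    norm_num [h12]
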